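/- Fix a real number p with 0 < p < 1 and ε with 0 < ε < 1/2, set q = 1/p, and for each n let r = r(n) = ⌊z(n,p) − ε⌋. Then there exists a constant C'' > 0 (independent of n) such that for all sufficiently large n, T_{(r−1,0,0,r−1)} ≤ C''·(log_q n)⁴/n². In particular r⁴·T_{(r−1,0,0,r−1)} → 0 as n → ∞. -/

import Mathlib

set_option maxHeartbeats 1600000


open Finset Filter

noncomputable section

/-- `z(n,p) = 2 log_q n − 2 log_q log_q n + 2 log_q (e/2) + 1`, where `q = 1/p`. -/
def zf (p : ℝ) (n : ℕ) : ℝ :=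
  2 * Real.logb p⁻¹ n - 2 * Real.logb p⁻¹ (Real.logb p⁻¹ n)
    + 2 * Real.logb p⁻¹ (Real.exp 1 / 2) + 1

/-- The set `D` of vectors `(a,b,c,d)` of nonnegative integers with
`a+b ≤ r`, `a+c ≤ r`, `c+d ≤ r`, `b+d ≤ r`. -/
def Dset (r : ℕ) : Finset (ℕ × ℕ × ℕ × ℕ) :=
  (Finset.range (r+1) ×ˢ Finset.range (r+1) ×ˢ Finset.range (r+1) ×ˢ Finset.range (r+1)).filter
    (fun α => α.1 + α.2.1 ≤ r ∧ α.1 + α.2.2.1 ≤ r ∧ α.2.2.1 + α.2.2.2 ≤ r ∧ α.2.1 + α.2.2.2 ≤ r)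

/-- The coefficient `F_α` for `α = (a,b,c,d)`. -/
def Fa (n r : ℕ) (α : ℕ × ℕ × ℕ × ℕ) : ℝ :=
  match α with
  | (a, b, c, d) =>
    ((r.factorial : ℝ) / ((a.factorial : ℝ) * c.factorial * (r - a - c).factorial)) *
    ((r.factorial : ℝ) / ((b.factorial : ℝ) * d.factorial * (r - b - d).factorial)) *
    (((n - 2*r).factorial : ℝ) /
      (((r - a - b).factorial : ℝ) * (r - c - d).factorial * (n - 4*r + a + b + c + d).factorial)) /
    ((n.factorial : ℝ) / ((r.factorial : ℝ) * r.factorial * (n - 2*r).factorial))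

/-- `L(α) = C(a,2) + C(b,2) + C(c,2) + C(d,2)`. -/
def La (α : ℕ × ℕ × ℕ × ℕ) : ℕ :=
  α.1.choose 2 + α.2.1.choose 2 + α.2.2.1.choose 2 + α.2.2.2.choose 2

/-- `T_α = F_α · q^{L(α)}` with `q = 1/p`. -/
def Ta (n r : ℕ) (p : ℝ) (α : ℕ × ℕ × ℕ × ℕ) : ℝ := Fa n r α * (p⁻¹) ^ (La α)

/-- For `r = r(n) = ⌊z(n,p) − ε⌋` there is a constant `C'' > 0` such that for all sufficiently
large `n`, `T_{(r−1,0,0,r−1)} ≤ C''·(log_q n)⁴/n²`; in particular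
`r⁴·T_{(r−1,0,0,r−1)} → 0`. -/
lemma fact_upper (r : ℕ) (hr : 1 ≤ r) :
    (r.factorial : ℝ) ≤ Real.exp 1 * Real.sqrt r * (r / Real.exp 1) ^ r := by
  obtain ⟨s, rfl⟩ : ∃ s, r = s + 1 := ⟨r - 1, by omega⟩
  have h1 : Stirling.stirlingSeq (s + 1) ≤ Stirling.stirlingSeq 1 :=
    Stirling.stirlingSeq'_antitone (Nat.zero_le s)
  rw [Stirling.stirlingSeq_one] at h1
  have hden : (0:ℝ) < Real.sqrt (2 * (s+1 : ℕ)) * (((s+1:ℕ):ℝ) / Real.exp 1) ^ (s+1) := by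
    positivity
  have hfact : ((s+1).factorial : ℝ)
      = Stirling.stirlingSeq (s+1) * (Real.sqrt (2 * (s+1 : ℕ)) * (((s+1:ℕ):ℝ) / Real.exp 1) ^ (s+1)) := by
    rw [Stirling.stirlingSeq]
    field_simp
  rw [hfact]
  have hsqrt : Real.sqrt (2 * ((s+1:ℕ):ℝ)) = Real.sqrt 2 * Real.sqrt ((s+1:ℕ):ℝ) := by
    rw [Real.sqrt_mul (by norm_num)]
  calc Stirling.stirlingSeq (s+1) * (Real.sqrt (2 * (s+1 : ℕ)) * (((s+1:ℕ):ℝ) / Real.exp 1) ^ (s+1))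
      ≤ (Real.exp 1 / Real.sqrt 2) * (Real.sqrt (2 * (s+1 : ℕ)) * (((s+1:ℕ):ℝ) / Real.exp 1) ^ (s+1)) := by
        apply mul_le_mul_of_nonneg_right h1 hden.le
    _ = Real.exp 1 * Real.sqrt ((s+1:ℕ):ℝ) * (((s+1:ℕ):ℝ) / Real.exp 1) ^ (s+1) := by
        rw [hsqrt]
        push_cast
        have h2 : Real.sqrt 2 ≠ 0 := by positivity
        field_simp

set_option maxHeartbeats 1000000 in
lemma Ta_eq (p : ℝ) (n r : ℕ) (hr : 2 ≤ r) (hn : 4*r+2 ≤ n) :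
    Ta n r p (r-1, 0, 0, r-1)
      = (r:ℝ)^2 * ((n-2*r:ℕ):ℝ) * (((n-2*r:ℕ):ℝ) - 1)
        * (((r.factorial:ℝ))^2 * ((n-2*r).factorial:ℝ) / (n.factorial:ℝ))
        * (p⁻¹)^(2 * ((r-1).choose 2)) := by
  obtain ⟨s, rfl⟩ : ∃ s, r = s+2 := ⟨r-2, by omega⟩
  obtain ⟨k, rfl⟩ : ∃ k, n = 4*s+10+k := ⟨n-(4*s+10), by omega⟩
  have h0 : s+2-1 = s+1 := by omega
  have h1 : (4*s+10+k) - 2*(s+2) = 2*s+6+k := by omega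
  have h2 : s+2-(s+1)-0 = 1 := by omega
  have h3 : s+2-0-(s+1) = 1 := by omega
  have h4 : s+2-(s+1)-(0:ℕ) = 1 := by omega
  have h5 : (4*s+10+k) - 4*(s+2)+(s+1)+0+0+(s+1) = 2*s+4+k := by omega
  have hLa : La (s+1, 0, 0, s+1) = 2 * ((s+1).choose 2) := by
    simp [La, two_mul]
  simp only [Ta, Fa, h0, h1, h2, h3, h4, h5, hLa, Nat.factorial_one, Nat.factorial_zero]
  have hf1 : ((s+2).factorial : ℝ) = (s+2) * (s+1).factorial := by
    rw [show s+2 = (s+1)+1 by omega, Nat.factorial_succ]; push_cast; ring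
  have hf2 : ((2*s+6+k).factorial : ℝ) = (2*s+6+k) * ((2*s+5+k) * (2*s+4+k).factorial) := by
    rw [show 2*s+6+k = (2*s+5+k)+1 by omega, Nat.factorial_succ,
        show 2*s+5+k = (2*s+4+k)+1 by omega, Nat.factorial_succ]
    push_cast; ring
  have hp1 : ((s+1).factorial : ℝ) ≠ 0 := by positivity
  have hp2 : ((2*s+4+k).factorial : ℝ) ≠ 0 := by positivity
  have hp3 : ((4*s+10+k).factorial : ℝ) ≠ 0 := by positivity
  rw [hf1, hf2]
  generalize p⁻¹ ^ (2 * ((s+1).choose 2)) = Q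
  generalize hA : ((s+1).factorial : ℝ) = A at hp1 ⊢
  generalize hB : ((2*s+4+k).factorial : ℝ) = B at hp2 ⊢
  generalize hC : ((4*s+10+k).factorial : ℝ) = C at hp3 ⊢
  push_cast
  field_simp
  ring

lemma rpow_two_logb {b x : ℝ} (hb : 1 < b) (hx : 0 < x) : b ^ (2 * Real.logb b x) = x ^ 2 := by
  rw [mul_comm, Real.rpow_mul (by linarith : (0:ℝ) ≤ b),
    Real.rpow_logb (by linarith) (by linarith) hx, Real.rpow_two]

theorem stmt14 (p ε : ℝ) (hp0 : 0 < p) (hp1 : p < 1) (hε : 0 < ε) (hε' : ε < 1/2) :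
    (∃ C'' : ℝ, 0 < C'' ∧ ∀ᶠ n : ℕ in atTop,
      Ta n ⌊zf p n - ε⌋.toNat p
          (⌊zf p n - ε⌋.toNat - 1, 0, 0, ⌊zf p n - ε⌋.toNat - 1) ≤
        C'' * (Real.logb p⁻¹ n) ^ 4 / (n : ℝ) ^ 2) ∧
    Tendsto (fun n : ℕ => (⌊zf p n - ε⌋.toNat : ℝ) ^ 4 *
        Ta n ⌊zf p n - ε⌋.toNat p
          (⌊zf p n - ε⌋.toNat - 1, 0, 0, ⌊zf p n - ε⌋.toNat - 1))
      atTop (nhds 0) := by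
  have hq : (1:ℝ) < p⁻¹ := (one_lt_inv₀ hp0).2 hp1
  have hq0 : (0:ℝ) < p⁻¹ := lt_trans zero_lt_one hq
  have hq0' : (0:ℝ) ≤ p⁻¹ := hq0.le
  have hqne : p⁻¹ ≠ 1 := ne_of_gt hq
  have hc : (0:ℝ) < Real.log p⁻¹ := Real.log_pos hq
  -- generic exponential decay
  have haux : ∀ (k : ℕ) (b : ℝ), 0 < b →
      Tendsto (fun y : ℝ => y ^ k * Real.exp (-(b * y))) atTop (nhds 0) := by
    intro k b hb
    have h2 : Tendsto (fun y : ℝ => b * y) atTop atTop := tendsto_id.const_mul_atTop hb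
    have h3 := (Real.tendsto_pow_mul_exp_neg_atTop_nhds_zero k).comp h2
    have h4 := h3.const_mul ((b⁻¹) ^ k)
    rw [mul_zero] at h4
    refine h4.congr fun y => ?_
    simp only [Function.comp_apply]
    have hbne : b ≠ 0 := ne_of_gt hb
    rw [mul_pow]
    field_simp
    rw [← mul_pow]
    simp [hbne]
  have hrr_lb : ∀ n : ℕ, zf p n - ε - 1 < (⌊zf p n - ε⌋.toNat : ℝ) := by
    intro n
    have h1 := Int.lt_floor_add_one (zf p n - ε)
    have h2 : ((⌊zf p n - ε⌋ : ℤ) : ℝ) ≤ ((⌊zf p n - ε⌋.toNat : ℕ) : ℝ) := by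
      exact_mod_cast Int.self_le_toNat _
    linarith
  have hL_top : Tendsto (fun n : ℕ => Real.logb p⁻¹ n) atTop atTop :=
    (Real.tendsto_logb_atTop hq).comp tendsto_natCast_atTop_atTop
  have hz_ge : ∀ᶠ n : ℕ in atTop,
      Real.logb p⁻¹ n + (2 * Real.logb p⁻¹ (Real.exp 1 / 2) + 1) ≤ zf p n := by
    filter_upwards [hL_top.eventually_ge_atTop (max 1 ((4 / Real.log p⁻¹) ^ 2))] with n hn
    have hl1 : (1:ℝ) ≤ Real.logb p⁻¹ n := le_trans (le_max_left _ _) hn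
    have hl0 : (0:ℝ) < Real.logb p⁻¹ n := by linarith
    have h4c : (4 / Real.log p⁻¹) ^ 2 ≤ Real.logb p⁻¹ n := le_trans (le_max_right _ _) hn
    have hsq : 4 / Real.log p⁻¹ ≤ Real.sqrt (Real.logb p⁻¹ n) := by
      have := Real.sqrt_le_sqrt h4c
      rwa [Real.sqrt_sq (by positivity)] at this
    have hlog : Real.log (Real.logb p⁻¹ n) ≤ 2 * Real.sqrt (Real.logb p⁻¹ n) := by
      have h1 : Real.log (Real.sqrt (Real.logb p⁻¹ n)) ≤ Real.sqrt (Real.logb p⁻¹ n) - 1 :=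
        Real.log_le_sub_one_of_pos (Real.sqrt_pos.2 hl0)
      have h2 : Real.log (Real.sqrt (Real.logb p⁻¹ n)) = Real.log (Real.logb p⁻¹ n) / 2 :=
        Real.log_sqrt hl0.le
      linarith [Real.sqrt_nonneg (Real.logb p⁻¹ n)]
    have hss := Real.mul_self_sqrt hl0.le
    have hkey : 2 * Real.logb p⁻¹ (Real.logb p⁻¹ n) ≤ Real.logb p⁻¹ n := by
      rw [Real.logb]
      rw [show 2 * (Real.log (Real.logb p⁻¹ n) / Real.log p⁻¹)
          = (2 * Real.log (Real.logb p⁻¹ n)) / Real.log p⁻¹ by ring, div_le_iff₀ hc]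
      have hsq' : 4 ≤ Real.sqrt (Real.logb p⁻¹ n) * Real.log p⁻¹ := (div_le_iff₀ hc).1 hsq
      nlinarith [Real.sqrt_nonneg (Real.logb p⁻¹ n)]
    show _ ≤ zf p n
    rw [zf]
    linarith
  have hz_top : Tendsto (fun n : ℕ => zf p n) atTop atTop :=
    tendsto_atTop_mono' _ hz_ge (tendsto_atTop_add_const_right _ _ hL_top)
  have hzε_top : Tendsto (fun n : ℕ => zf p n - ε - 1) atTop atTop := by
    have h := tendsto_atTop_add_const_right atTop (-ε - 1) hz_top
    exact h.congr fun n => by ring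
  have hR_top : Tendsto (fun n : ℕ => ((⌊zf p n - ε⌋.toNat : ℕ) : ℝ)) atTop atTop :=
    tendsto_atTop_mono' _ (Eventually.of_forall fun n => (hrr_lb n).le) hzε_top
  obtain ⟨K0, hK0, hK0def⟩ : ∃ K0 : ℝ, 0 < K0 ∧
      K0 = Real.exp 1 ^ 2 * (2 / Real.exp 1) ^ 4 * p⁻¹ ^ ((2:ℝ) + 2*ε) :=
    ⟨_, by positivity, rfl⟩
  obtain ⟨a, ha, hadef⟩ : ∃ a : ℝ, 0 < a ∧ a = Real.log p⁻¹ * (ε / 2) :=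
    ⟨_, mul_pos hc (by linarith), rfl⟩
  have hG_ev : ∀ᶠ x : ℝ in atTop, K0 * (x ^ 7 * Real.exp (-(a * x))) ≤ 1 := by
    have h := (haux 7 a ha).const_mul K0
    rw [mul_zero] at h
    exact h.eventually_le_const one_pos
  obtain ⟨κ, hκ, hκdef⟩ : ∃ κ : ℝ, 0 < κ ∧ κ = 1 - p⁻¹ ^ (-(ε/4) : ℝ) := by
    refine ⟨_, ?_, rfl⟩
    have := Real.rpow_lt_one_of_one_lt_of_neg hq (show -(ε/4) < 0 by linarith)
    linarith
  -- two limits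
  have hlim4 : Tendsto (fun n : ℕ => (Real.logb p⁻¹ n) ^ 4 / (n:ℝ) ^ 2) atTop (nhds 0) := by
    have h := ((haux 4 2 two_pos).comp
      (Real.tendsto_log_atTop.comp tendsto_natCast_atTop_atTop)).const_mul ((Real.log p⁻¹)⁻¹ ^ 4)
    rw [mul_zero] at h
    refine h.congr' ?_
    filter_upwards [eventually_ge_atTop 1] with n hn
    have hn0 : (0:ℝ) < (n:ℝ) := by exact_mod_cast Nat.lt_of_lt_of_le Nat.zero_lt_one hn
    simp only [Function.comp_apply]
    have hexp : Real.exp (-(2 * Real.log (n:ℝ))) = (((n:ℝ))^2)⁻¹ := by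
      rw [two_mul, neg_add, Real.exp_add, Real.exp_neg, Real.exp_log hn0,
        ← mul_inv, ← sq]
    rw [hexp, Real.logb]
    have hcne : Real.log p⁻¹ ≠ 0 := ne_of_gt hc
    field_simp
    try ring
  have hlim1 : Tendsto (fun n : ℕ => Real.logb p⁻¹ n / (n:ℝ)) atTop (nhds 0) := by
    have h := ((haux 1 1 one_pos).comp
      (Real.tendsto_log_atTop.comp tendsto_natCast_atTop_atTop)).const_mul ((Real.log p⁻¹)⁻¹)
    rw [mul_zero] at h
    refine h.congr' ?_
    filter_upwards [eventually_ge_atTop 1] with n hn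
    have hn0 : (0:ℝ) < (n:ℝ) := by exact_mod_cast Nat.lt_of_lt_of_le Nat.zero_lt_one hn
    simp only [Function.comp_apply, pow_one]
    have hexp : Real.exp (-(1 * Real.log (n:ℝ))) = ((n:ℝ))⁻¹ := by
      rw [one_mul, Real.exp_neg, Real.exp_log hn0]
    rw [hexp, Real.logb]
    have hcne : Real.log p⁻¹ ≠ 0 := ne_of_gt hc
    field_simp
  have hminpos : (0:ℝ) < min (κ/4) (1/100) := lt_min (by positivity) (by norm_num)
  -- main eventual bound
  have main : ∀ᶠ n : ℕ in atTop,
      0 ≤ Ta n ⌊zf p n - ε⌋.toNat p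
          (⌊zf p n - ε⌋.toNat - 1, 0, 0, ⌊zf p n - ε⌋.toNat - 1) ∧
      Ta n ⌊zf p n - ε⌋.toNat p
          (⌊zf p n - ε⌋.toNat - 1, 0, 0, ⌊zf p n - ε⌋.toNat - 1)
        ≤ Real.logb p⁻¹ n ^ 4 / (n:ℝ) ^ 2 ∧
      ((⌊zf p n - ε⌋.toNat : ℕ) : ℝ) ^ 4 * Ta n ⌊zf p n - ε⌋.toNat p
          (⌊zf p n - ε⌋.toNat - 1, 0, 0, ⌊zf p n - ε⌋.toNat - 1)
        ≤ Real.logb p⁻¹ n ^ 4 / (n:ℝ) ^ 2 := by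
    filter_upwards [eventually_ge_atTop 100,
      hL_top.eventually_ge_atTop (max 1 (p⁻¹ ^ ((1:ℝ)/2) * (Real.exp 1 / 2))),
      hz_top.eventually_ge_atTop (ε + 5),
      hlim1.eventually_le_const hminpos,
      hR_top.eventually hG_ev] with n hn100 hlb hzb hln hG'
    set r := ⌊zf p n - ε⌋.toNat with hrdef
    set R := ((r:ℕ):ℝ) with hRdef
    have hN100 : (100:ℝ) ≤ (n:ℝ) := by exact_mod_cast hn100
    have hN0 : (0:ℝ) < (n:ℝ) := by linarith
    have hl1 : (1:ℝ) ≤ Real.logb p⁻¹ n := le_trans (le_max_left _ _) hlb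
    have hl0 : (0:ℝ) < Real.logb p⁻¹ n := by linarith
    have hRlb : zf p n - ε - 1 < R := hrr_lb n
    have hR3 : (3:ℝ) ≤ R := by linarith
    have hR1 : (1:ℝ) ≤ R := by linarith
    have hr2 : 2 ≤ r := by
      have h : (2:ℝ) ≤ ((r:ℕ):ℝ) := by rw [← hRdef]; linarith
      exact_mod_cast h
    have hRub : R ≤ zf p n - ε := by
      have h0 : (0:ℤ) ≤ ⌊zf p n - ε⌋ := Int.floor_nonneg.2 (by linarith)
      have h1 : R = ((⌊zf p n - ε⌋ : ℤ) : ℝ) := by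
        rw [hRdef, hrdef]
        exact_mod_cast congrArg (fun z : ℤ => (z : ℝ)) (Int.toNat_of_nonneg h0)
      rw [h1]; exact Int.floor_le _
    have hzdef : zf p n = 2 * Real.logb p⁻¹ n - 2 * Real.logb p⁻¹ (Real.logb p⁻¹ n)
        + 2 * Real.logb p⁻¹ (Real.exp 1 / 2) + 1 := rfl
    have hR2ℓ : R ≤ 2 * Real.logb p⁻¹ n := by
      have hlogb : Real.logb p⁻¹ (p⁻¹ ^ ((1:ℝ)/2) * (Real.exp 1/2))
          = 1/2 + Real.logb p⁻¹ (Real.exp 1/2) := by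
        rw [Real.logb_mul (by positivity) (by positivity), Real.logb_rpow hq0 hqne]
      have h2 : 1/2 + Real.logb p⁻¹ (Real.exp 1/2) ≤ Real.logb p⁻¹ (Real.logb p⁻¹ n) := by
        rw [← hlogb]
        exact Real.logb_le_logb_of_le hq (by positivity) (le_trans (le_max_right _ _) hlb)
      rw [hzdef] at hRub
      linarith
    have hlN : Real.logb p⁻¹ n ≤ min (κ/4) (1/100) * (n:ℝ) := by
      rw [div_le_iff₀ hN0] at hln
      exact hln
    have hl100 : Real.logb p⁻¹ n ≤ (n:ℝ)/100 := by
      calc Real.logb p⁻¹ n ≤ min (κ/4) (1/100) * (n:ℝ) := hlN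
        _ ≤ (1/100) * (n:ℝ) := mul_le_mul_of_nonneg_right (min_le_right _ _) hN0.le
        _ = (n:ℝ)/100 := by ring
    have hrn : 4*r + 2 ≤ n := by
      have h1 : 4*R + 2 ≤ (n:ℝ) := by linarith
      exact_mod_cast (show ((4*r+2:ℕ):ℝ) ≤ (n:ℝ) by push_cast; linarith)
    have h2rn : 2*r ≤ n := by omega
    have hmcast : ((n - 2*r : ℕ):ℝ) = (n:ℝ) - 2*R := by
      rw [Nat.cast_sub h2rn]; push_cast; ring
    have hM92 : (92:ℝ) ≤ (n:ℝ) - 2*R := by linarith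
    have hM0 : (0:ℝ) < (n:ℝ) - 2*R := by linarith
    have hNM : (n:ℝ) ≤ ((n:ℝ) - 2*R) * p⁻¹ ^ ((ε/4 : ℝ)) := by
      have h1 : 2*R ≤ κ * (n:ℝ) := by
        have h2 : Real.logb p⁻¹ n ≤ κ/4 * (n:ℝ) :=
          le_trans hlN (mul_le_mul_of_nonneg_right (min_le_left _ _) hN0.le)
        linarith
      have h2 : (n:ℝ) * p⁻¹ ^ (-(ε/4):ℝ) ≤ (n:ℝ) - 2*R := by
        rw [hκdef] at h1
        nlinarith
      calc (n:ℝ) = (n:ℝ) * p⁻¹ ^ (-(ε/4):ℝ) * p⁻¹ ^ ((ε/4):ℝ) := by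
            rw [mul_assoc, ← Real.rpow_add hq0]; norm_num
        _ ≤ ((n:ℝ) - 2*R) * p⁻¹ ^ ((ε/4):ℝ) :=
            mul_le_mul_of_nonneg_right h2 (Real.rpow_nonneg hq0' _)
    -- value of q^z
    have hz_val : p⁻¹ ^ (zf p n)
        = (n:ℝ)^2 / (Real.logb p⁻¹ n)^2 * (Real.exp 1/2)^2 * p⁻¹ ^ ((1:ℝ)) := by
      rw [hzdef,
        show 2 * Real.logb p⁻¹ n - 2 * Real.logb p⁻¹ (Real.logb p⁻¹ n)
            + 2 * Real.logb p⁻¹ (Real.exp 1 / 2) + 1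
          = 2 * Real.logb p⁻¹ (n:ℝ) + (-(2 * Real.logb p⁻¹ (Real.logb p⁻¹ n))
            + (2 * Real.logb p⁻¹ (Real.exp 1 / 2) + (1:ℝ))) by ring,
        Real.rpow_add hq0, Real.rpow_add hq0, Real.rpow_add hq0,
        Real.rpow_neg hq0', rpow_two_logb hq hN0, rpow_two_logb hq hl0,
        rpow_two_logb hq (by positivity : (0:ℝ) < Real.exp 1/2)]
      ring
    have hq_up : p⁻¹ ^ ((R:ℝ)) ≤ (n:ℝ)^2 / (Real.logb p⁻¹ n)^2 * (Real.exp 1/2)^2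
        * p⁻¹ ^ ((1:ℝ)) * p⁻¹ ^ (-ε : ℝ) := by
      have h1 : p⁻¹ ^ ((R:ℝ)) ≤ p⁻¹ ^ (zf p n - ε) := (Real.rpow_le_rpow_left_iff hq).2 hRub
      rwa [show zf p n - ε = zf p n + (-ε) by ring, Real.rpow_add hq0, hz_val] at h1
    have hq_dn : (n:ℝ)^2 / (Real.logb p⁻¹ n)^2 * (Real.exp 1/2)^2 * p⁻¹ ^ (-ε : ℝ)
        ≤ p⁻¹ ^ ((R:ℝ)) := by
      have h1 : p⁻¹ ^ (zf p n - ε - 1) ≤ p⁻¹ ^ ((R:ℝ)) :=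
        (Real.rpow_le_rpow_left_iff hq).2 hRlb.le
      rw [show zf p n - ε - 1 = zf p n + (-ε - 1) by ring, Real.rpow_add hq0, hz_val] at h1
      have h2 : (n:ℝ)^2 / (Real.logb p⁻¹ n)^2 * (Real.exp 1/2)^2 * p⁻¹ ^ ((1:ℝ))
          * p⁻¹ ^ (-ε - 1 : ℝ)
          = (n:ℝ)^2 / (Real.logb p⁻¹ n)^2 * (Real.exp 1/2)^2 * p⁻¹ ^ (-ε : ℝ) := by
        rw [mul_assoc, ← Real.rpow_add hq0, show (1:ℝ) + (-ε - 1) = -ε by ring]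
      rwa [h2] at h1
    -- nonnegativity of Ta
    have hTa0 : 0 ≤ Ta n r p (r-1, 0, 0, r-1) := by
      have h1 : 0 ≤ Fa n r (r-1, 0, 0, r-1) := by
        simp only [Fa]
        positivity
      exact mul_nonneg h1 (pow_nonneg hq0' _)
    have hfac2 : ((r.factorial:ℝ))^2 ≤ Real.exp 1^2 * R * (((R/Real.exp 1)^2))^r := by
      have h := fact_upper r (by omega)
      calc ((r.factorial:ℝ))^2 ≤ (Real.exp 1 * Real.sqrt R * (R/Real.exp 1)^r)^2 :=
            pow_le_pow_left₀ (by positivity) h 2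
        _ = Real.exp 1^2 * (Real.sqrt R)^2 * ((R/Real.exp 1)^r)^2 := by ring
        _ = Real.exp 1^2 * R * (((R/Real.exp 1)^2))^r := by
            rw [Real.sq_sqrt (by positivity : (0:ℝ) ≤ R), pow_right_comm]
    have hdivfac : ((n-2*r).factorial:ℝ) / (n.factorial:ℝ) ≤ 1 / ((((n:ℝ)-2*R)^2)^r) := by
      rw [div_le_div_iff₀ (by positivity) (by positivity)]
      have h := Nat.factorial_mul_pow_le_factorial (m := n-2*r) (n := 2*r)
      rw [show n - 2*r + 2*r = n by omega] at h
      have h2 : (((n-2*r).factorial : ℕ):ℝ) * ((((n-2*r) + 1 : ℕ)):ℝ)^(2*r) ≤ ((n.factorial:ℕ):ℝ) := by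
        exact_mod_cast h
      have h3 : (((n:ℝ)-2*R)^2)^r = ((n:ℝ)-2*R)^(2*r) := by rw [← pow_mul]
      have h4 : ((n:ℝ)-2*R)^(2*r) ≤ ((((n-2*r) + 1 : ℕ)):ℝ)^(2*r) := by
        apply pow_le_pow_left₀ hM0.le
        have h5 : ((((n-2*r) + 1 : ℕ)):ℝ) = ((n-2*r:ℕ):ℝ) + 1 := by push_cast; ring
        rw [h5, hmcast]
        linarith
      calc ((n-2*r).factorial:ℝ) * (((n:ℝ)-2*R)^2)^r
          = ((n-2*r).factorial:ℝ) * ((n:ℝ)-2*R)^(2*r) := by rw [h3]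
        _ ≤ ((n-2*r).factorial:ℝ) * ((((n-2*r) + 1 : ℕ)):ℝ)^(2*r) :=
            mul_le_mul_of_nonneg_left h4 (by positivity)
        _ ≤ (n.factorial:ℝ) := h2
        _ = 1 * (n.factorial:ℝ) := (one_mul _).symm
    have hQ : (p⁻¹) ^ (2 * ((r-1).choose 2)) = p⁻¹ ^ (((R-1)*(R-2) : ℝ)) := by
      rw [← Real.rpow_natCast p⁻¹ (2 * ((r-1).choose 2))]
      congr 1
      have hr1 : ((r-1 : ℕ):ℝ) = R - 1 := by
        rw [Nat.cast_sub (by omega : 1 ≤ r), ← hRdef]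
        norm_num
      push_cast [Nat.cast_choose_two]
      rw [hr1]
      ring
    have hNdM : (n:ℝ)/((n:ℝ)-2*R) ≤ p⁻¹ ^ ((ε/4:ℝ)) := (div_le_iff₀ hM0).2 (by linarith [hNM])
    have hqq : (p⁻¹ ^ ((ε/4):ℝ))^2 = p⁻¹ ^ ((ε/2):ℝ) := by
      rw [← Real.rpow_natCast (p⁻¹ ^ ((ε/4:ℝ))) 2, ← Real.rpow_mul hq0']
      congr 1
      push_cast
      ring
    have hBB : (R/(Real.exp 1 * ((n:ℝ)-2*R)))^2 * p⁻¹ ^ ((R:ℝ)-2) ≤ p⁻¹ ^ (-(1+ε/2) : ℝ) := by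
      have h1 : p⁻¹ ^ ((R:ℝ)-2) = p⁻¹ ^ ((R:ℝ)) * p⁻¹ ^ ((-2:ℝ)) := by
        rw [← Real.rpow_add hq0]; congr 1; try ring
      have hup2 : p⁻¹ ^ ((R:ℝ)-2) ≤ (n:ℝ)^2 / (Real.logb p⁻¹ n)^2 * (Real.exp 1/2)^2
          * (p⁻¹ ^ ((1:ℝ)) * p⁻¹ ^ (-ε:ℝ) * p⁻¹ ^ ((-2):ℝ)) := by
        rw [h1]
        calc p⁻¹ ^ ((R:ℝ)) * p⁻¹ ^ ((-2:ℝ))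
            ≤ ((n:ℝ)^2 / (Real.logb p⁻¹ n)^2 * (Real.exp 1/2)^2
                * p⁻¹ ^ ((1:ℝ)) * p⁻¹ ^ (-ε : ℝ)) * p⁻¹ ^ ((-2:ℝ)) :=
              mul_le_mul_of_nonneg_right hq_up (Real.rpow_nonneg hq0' _)
          _ = (n:ℝ)^2 / (Real.logb p⁻¹ n)^2 * (Real.exp 1/2)^2
                * (p⁻¹ ^ ((1:ℝ)) * p⁻¹ ^ (-ε:ℝ) * p⁻¹ ^ ((-2):ℝ)) := by ring
      calc (R/(Real.exp 1 * ((n:ℝ)-2*R)))^2 * p⁻¹ ^ ((R:ℝ)-2)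
          ≤ (R/(Real.exp 1 * ((n:ℝ)-2*R)))^2 * ((n:ℝ)^2 / (Real.logb p⁻¹ n)^2 * (Real.exp 1/2)^2
              * (p⁻¹ ^ ((1:ℝ)) * p⁻¹ ^ (-ε:ℝ) * p⁻¹ ^ ((-2):ℝ))) :=
            mul_le_mul_of_nonneg_left hup2 (by positivity)
        _ = ((R/(Real.exp 1 * ((n:ℝ)-2*R)))^2 * ((n:ℝ)^2 / (Real.logb p⁻¹ n)^2 * (Real.exp 1/2)^2))
              * (p⁻¹ ^ ((1:ℝ)) * p⁻¹ ^ (-ε:ℝ) * p⁻¹ ^ ((-2):ℝ)) := by ring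
        _ ≤ p⁻¹ ^ ((ε/2):ℝ) * (p⁻¹ ^ ((1:ℝ)) * p⁻¹ ^ (-ε:ℝ) * p⁻¹ ^ ((-2):ℝ)) := by
            apply mul_le_mul_of_nonneg_right _ (by positivity)
            have hE0 : Real.exp 1 ≠ 0 := (Real.exp_pos 1).ne'
            have key1 : (R/(Real.exp 1*((n:ℝ)-2*R))) * (Real.exp 1/2)
                = R/(((n:ℝ)-2*R)*2) := by
              rw [div_mul_div_comm, mul_assoc, mul_comm R (Real.exp 1)]
              exact mul_div_mul_left R (((n:ℝ)-2*R)*2) hE0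
            have key2 : (R/(Real.exp 1*((n:ℝ)-2*R)))^2
                * ((n:ℝ)^2/(Real.logb p⁻¹ n)^2*(Real.exp 1/2)^2)
                = ((R/(((n:ℝ)-2*R)*2)) * ((n:ℝ)/(Real.logb p⁻¹ n)))^2 := by
              rw [← key1]; ring
            have key3 : (R/(((n:ℝ)-2*R)*2)) * ((n:ℝ)/(Real.logb p⁻¹ n)) ≤ p⁻¹ ^ ((ε/4):ℝ) := by
              rw [div_mul_div_comm, div_le_iff₀ (by positivity)]
              calc R * (n:ℝ)
                  ≤ (2*Real.logb p⁻¹ n) * (((n:ℝ)-2*R) * p⁻¹ ^ ((ε/4):ℝ)) :=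
                    mul_le_mul hR2ℓ hNM hN0.le (by positivity)
                _ = p⁻¹ ^ ((ε/4):ℝ) * (((n:ℝ)-2*R)*2*Real.logb p⁻¹ n) := by ring
            calc (R/(Real.exp 1*((n:ℝ)-2*R)))^2 * ((n:ℝ)^2/(Real.logb p⁻¹ n)^2*(Real.exp 1/2)^2)
                = ((R/(((n:ℝ)-2*R)*2)) * ((n:ℝ)/(Real.logb p⁻¹ n)))^2 := key2
              _ ≤ (p⁻¹ ^ ((ε/4):ℝ))^2 := pow_le_pow_left₀ (by positivity) key3 2
              _ = p⁻¹ ^ ((ε/2):ℝ) := hqq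
        _ = p⁻¹ ^ (-(1+ε/2) : ℝ) := by
            rw [← Real.rpow_add hq0, ← Real.rpow_add hq0, ← Real.rpow_add hq0]
            congr 1; try ring
    have step2 : (((R/Real.exp 1)^2))^r * (1/((((n:ℝ)-2*R)^2)^r))
        = (((R/(Real.exp 1 * ((n:ℝ)-2*R)))^2))^r := by
      rw [one_div, ← inv_pow, ← mul_pow]
      congr 1
      generalize hM : (n:ℝ) - 2*R = M
      have hM0' : M ≠ 0 := hM ▸ ne_of_gt hM0
      generalize hE : Real.exp 1 = E
      have hE0 : E ≠ 0 := hE ▸ (Real.exp_pos 1).ne'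
      field_simp
      try ring
    have step3 : (((R/(Real.exp 1 * ((n:ℝ)-2*R)))^2))^r * p⁻¹ ^ (((R-1)*(R-2) : ℝ))
        = ((R/(Real.exp 1 * ((n:ℝ)-2*R)))^2 * p⁻¹ ^ ((R:ℝ)-2))^r * p⁻¹ ^ ((2-R : ℝ)) := by
      rw [mul_pow, mul_assoc]
      congr 1
      rw [← Real.rpow_natCast (p⁻¹ ^ ((R:ℝ)-2)) r, ← Real.rpow_mul hq0',
        ← Real.rpow_add hq0]
      congr 1
      rw [← hRdef]
      ring
    have step4 : ((R/(Real.exp 1 * ((n:ℝ)-2*R)))^2 * p⁻¹ ^ ((R:ℝ)-2))^r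
        ≤ (p⁻¹ ^ (-(1+ε/2):ℝ))^r := pow_le_pow_left₀ (by positivity) hBB r
    have step5 : (p⁻¹ ^ (-(1+ε/2):ℝ))^r * p⁻¹ ^ ((2-R:ℝ))
        = (p⁻¹ ^ ((R:ℝ)))⁻¹ * (p⁻¹ ^ ((R:ℝ)))⁻¹ * p⁻¹ ^ ((2:ℝ)) * p⁻¹ ^ (-(ε/2)*R) := by
      rw [← Real.rpow_natCast (p⁻¹ ^ (-(1+ε/2):ℝ)) r, ← Real.rpow_mul hq0',
        ← Real.rpow_neg hq0', ← Real.rpow_add hq0, ← Real.rpow_add hq0, ← Real.rpow_add hq0,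
        ← Real.rpow_add hq0]
      congr 1
      rw [← hRdef]
      ring
    have hCexp : Real.exp (-(a*R)) = p⁻¹ ^ (-(ε/2)*R) := by
      rw [Real.rpow_def_of_pos hq0]
      congr 1
      rw [hadef]; ring
    have hinv : (p⁻¹ ^ ((R:ℝ)))⁻¹ ≤ (Real.logb p⁻¹ n)^2/(n:ℝ)^2 * (2/Real.exp 1)^2
        * p⁻¹ ^ ((ε:ℝ)) := by
      have h1 : (0:ℝ) < (n:ℝ)^2 / (Real.logb p⁻¹ n)^2 * (Real.exp 1/2)^2 * p⁻¹ ^ (-ε : ℝ) := by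
        positivity
      have h2 := inv_anti₀ h1 hq_dn
      calc (p⁻¹ ^ ((R:ℝ)))⁻¹
          ≤ ((n:ℝ)^2 / (Real.logb p⁻¹ n)^2 * (Real.exp 1/2)^2 * p⁻¹ ^ (-ε : ℝ))⁻¹ := h2
        _ = (Real.logb p⁻¹ n)^2/(n:ℝ)^2 * (2/Real.exp 1)^2 * p⁻¹ ^ ((ε:ℝ)) := by
            rw [Real.rpow_neg hq0']
            have hl0' : Real.logb p⁻¹ n ≠ 0 := ne_of_gt hl0
            have hqε : p⁻¹ ^ ((ε:ℝ)) ≠ 0 := ne_of_gt (Real.rpow_pos_of_pos hq0 _)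
            generalize hE : Real.exp 1 = E
            have hE0 : E ≠ 0 := hE ▸ (Real.exp_pos 1).ne'
            field_simp
            try ring
    have hTa_le : Ta n r p (r-1,0,0,r-1) ≤ K0 * R^3 * Real.exp (-(a*R))
        * ((Real.logb p⁻¹ n)^4/((n:ℝ))^2) := by
      calc Ta n r p (r-1,0,0,r-1)
          = R^2 * ((n-2*r:ℕ):ℝ) * (((n-2*r:ℕ):ℝ) - 1)
            * (((r.factorial:ℝ))^2 * ((n-2*r).factorial:ℝ) / (n.factorial:ℝ))
            * (p⁻¹)^(2 * ((r-1).choose 2)) := Ta_eq p n r hr2 hrn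
        _ = R^2 * ((n:ℝ)-2*R) * (((n:ℝ)-2*R) - 1)
            * (((r.factorial:ℝ))^2 * (((n-2*r).factorial:ℝ) / (n.factorial:ℝ)))
            * p⁻¹ ^ (((R-1)*(R-2):ℝ)) := by rw [hmcast, hQ, mul_div_assoc]
        _ ≤ R^2 * (n:ℝ) * (n:ℝ)
            * ((Real.exp 1^2 * R * (((R/Real.exp 1)^2))^r) * (1/((((n:ℝ)-2*R)^2)^r)))
            * p⁻¹ ^ (((R-1)*(R-2):ℝ)) := by
            apply mul_le_mul_of_nonneg_right _ (Real.rpow_nonneg hq0' _)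
            have hx1 : (n:ℝ)-2*R ≤ (n:ℝ) := by linarith
            have hx2 : ((n:ℝ)-2*R) - 1 ≤ (n:ℝ) := by linarith
            have hx3 : ((r.factorial:ℝ))^2 * (((n-2*r).factorial:ℝ) / (n.factorial:ℝ))
                ≤ (Real.exp 1^2 * R * (((R/Real.exp 1)^2))^r) * (1/((((n:ℝ)-2*R)^2)^r)) :=
              mul_le_mul hfac2 hdivfac (by positivity) (by positivity)
            have c0 : ((n:ℝ)-2*R) * (((n:ℝ)-2*R)-1) ≤ (n:ℝ) * (n:ℝ) :=
              mul_le_mul hx1 hx2 (by linarith) hN0.le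
            have c1 : R^2 * ((n:ℝ)-2*R) * (((n:ℝ)-2*R)-1) ≤ R^2 * (n:ℝ) * (n:ℝ) := by
              calc R^2 * ((n:ℝ)-2*R) * (((n:ℝ)-2*R)-1) = R^2 * (((n:ℝ)-2*R) * (((n:ℝ)-2*R)-1)) := by
                    ring
                _ ≤ R^2 * ((n:ℝ) * (n:ℝ)) := mul_le_mul_of_nonneg_left c0 (sq_nonneg R)
                _ = R^2 * (n:ℝ) * (n:ℝ) := by ring
            exact mul_le_mul c1 hx3 (by positivity) (by positivity)
        _ = Real.exp 1^2 * R^3 * (n:ℝ)^2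
            * ((((R/Real.exp 1)^2))^r * (1/((((n:ℝ)-2*R)^2)^r)) * p⁻¹ ^ (((R-1)*(R-2):ℝ))) := by
            ring
        _ = Real.exp 1^2 * R^3 * (n:ℝ)^2
            * (((R/(Real.exp 1 * ((n:ℝ)-2*R)))^2 * p⁻¹ ^ ((R:ℝ)-2))^r * p⁻¹ ^ ((2-R:ℝ))) := by
            rw [step2, step3]
        _ ≤ Real.exp 1^2 * R^3 * (n:ℝ)^2 * ((p⁻¹ ^ (-(1+ε/2):ℝ))^r * p⁻¹ ^ ((2-R:ℝ))) := by
            apply mul_le_mul_of_nonneg_left _ (by positivity)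
            exact mul_le_mul_of_nonneg_right step4 (Real.rpow_nonneg hq0' _)
        _ = Real.exp 1^2 * R^3 * (n:ℝ)^2
            * ((p⁻¹ ^ ((R:ℝ)))⁻¹ * (p⁻¹ ^ ((R:ℝ)))⁻¹ * p⁻¹ ^ ((2:ℝ)) * p⁻¹ ^ (-(ε/2)*R)) := by
            rw [step5]
        _ ≤ Real.exp 1^2 * R^3 * (n:ℝ)^2
            * (((Real.logb p⁻¹ n)^2/(n:ℝ)^2 * (2/Real.exp 1)^2 * p⁻¹ ^ ((ε:ℝ)))
              * ((Real.logb p⁻¹ n)^2/(n:ℝ)^2 * (2/Real.exp 1)^2 * p⁻¹ ^ ((ε:ℝ)))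
              * p⁻¹ ^ ((2:ℝ)) * p⁻¹ ^ (-(ε/2)*R)) := by
            apply mul_le_mul_of_nonneg_left _ (by positivity)
            have hv : (0:ℝ) ≤ (p⁻¹ ^ ((R:ℝ)))⁻¹ := by positivity
            have hw : (0:ℝ) ≤ (Real.logb p⁻¹ n)^2/(n:ℝ)^2 * (2/Real.exp 1)^2 * p⁻¹ ^ ((ε:ℝ)) := by
              positivity
            apply mul_le_mul_of_nonneg_right _ (Real.rpow_nonneg hq0' _)
            apply mul_le_mul_of_nonneg_right _ (Real.rpow_nonneg hq0' _)
            exact mul_le_mul hinv hinv hv hw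
        _ = K0 * R^3 * Real.exp (-(a*R)) * ((Real.logb p⁻¹ n)^4/((n:ℝ))^2) := by
            rw [hCexp, hK0def]
            have hD : p⁻¹ ^ ((ε:ℝ)) * p⁻¹ ^ ((ε:ℝ)) * p⁻¹ ^ ((2:ℝ)) = p⁻¹ ^ ((2:ℝ) + 2*ε) := by
              rw [← Real.rpow_add hq0, ← Real.rpow_add hq0]; congr 1; try ring
            rw [← hD]
            generalize hE : Real.exp 1 = E
            have hE0 : E ≠ 0 := hE ▸ (Real.exp_pos 1).ne'
            field_simp
            try ring
    have hfinal1 : K0 * R^3 * Real.exp (-(a*R)) ≤ 1 := by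
      have h1 : R^3 ≤ R^7 := pow_le_pow_right₀ hR1 (by norm_num)
      calc K0 * R^3 * Real.exp (-(a*R)) ≤ K0 * R^7 * Real.exp (-(a*R)) := by
            exact mul_le_mul_of_nonneg_right (mul_le_mul_of_nonneg_left h1 hK0.le) (Real.exp_pos _).le
        _ = K0 * (R^7 * Real.exp (-(a*R))) := by ring
        _ ≤ 1 := hG'
    refine ⟨hTa0, ?_, ?_⟩
    · calc Ta n r p (r-1,0,0,r-1)
          ≤ K0 * R^3 * Real.exp (-(a*R)) * ((Real.logb p⁻¹ n)^4/((n:ℝ))^2) := hTa_le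
        _ ≤ 1 * ((Real.logb p⁻¹ n)^4/((n:ℝ))^2) :=
            mul_le_mul_of_nonneg_right hfinal1 (by positivity)
        _ = (Real.logb p⁻¹ n)^4/((n:ℝ))^2 := one_mul _
    · calc R^4 * Ta n r p (r-1,0,0,r-1)
          ≤ R^4 * (K0 * R^3 * Real.exp (-(a*R)) * ((Real.logb p⁻¹ n)^4/((n:ℝ))^2)) :=
            mul_le_mul_of_nonneg_left hTa_le (by positivity)
        _ = (K0 * (R^7 * Real.exp (-(a*R)))) * ((Real.logb p⁻¹ n)^4/((n:ℝ))^2) := by ring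
        _ ≤ 1 * ((Real.logb p⁻¹ n)^4/((n:ℝ))^2) :=
            mul_le_mul_of_nonneg_right hG' (by positivity)
        _ = (Real.logb p⁻¹ n)^4/((n:ℝ))^2 := one_mul _
  constructor
  · refine ⟨1, one_pos, ?_⟩
    filter_upwards [main] with n h
    rw [one_mul]
    exact h.2.1
  · exact squeeze_zero' (main.mono fun n h => mul_nonneg (by positivity) h.1)
      (main.mono fun n h => h.2.2) hlim4


end
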